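/- Let X be a cycle set and φ a λ-endomorphism of the permutation brace G(X) (an additive endomorphism commuting with all λ_g, g ∈ G(X)). Then the permutation group of the φ-cabled cycle set X_φ equals φ(G(X)): the multiplicative subgroup generated by {φ(λ_x) : x ∈ X} coincides with the additive image φ(G(X)), and this is a left ideal of G(X). -/

import Mathlib

/-- the permutation group of the φ-cabled cycle set equals `φ(G(X))`:
the multiplicative subgroup generated by `{φ(λ_x) : x ∈ X}` coincides with the image
of `φ`, and this image is a left ideal of the permutation brace. -/
theorem permutation_group_of_endocabled_cycle_set
    {X G : Type*} [Finite X] [AddCommGroup G] [Group G]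
    (op : X → X → X)
    (hbij : ∀ x : X, Function.Bijective (op x))
    (hcy : ∀ x y z : X, op (op x y) (op x z) = op (op y x) (op y z))
    (hbrace : ∀ a b c : G, a * (b + c) = a * b - a + a * c)
    (act : G →* Equiv.Perm X) (hinj : Function.Injective act)
    (lam : X → G)
    (hlam : ∀ x y : X, act (lam x) (op x y) = y)
    (hfund : ∀ (g : G) (x : X), lam (act g x) = g * lam x - g)
    (hgen : AddSubgroup.closure (Set.range lam) = ⊤)
    (φ : G →+ G)
    (hφ : ∀ g h : G, g * φ h - g = φ (g * h - g)) :
    ((Subgroup.closure (Set.range fun x : X => φ (lam x)) : Subgroup G) : Set G)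
        = Set.range φ ∧
    ∀ g : G, ∀ a ∈ Set.range φ, g * a - g ∈ Set.range φ := by
  -- basic brace facts
  have hmul0 : ∀ a : G, a * 0 = a := by
    intro a
    have h := hbrace a 0 0
    rw [add_zero] at h
    nth_rewrite 1 [← zero_add (a * 0)] at h
    have h2 := add_right_cancel h
    exact sub_eq_zero.mp h2.symm
  have hone : (1 : G) = 0 := by
    have h := hmul0 1
    rw [one_mul] at h
    exact h.symm
  have hmulneg : ∀ a b : G, a * (-b) = a - a * b + a := by
    intro a b
    have h := hbrace a b (-b)
    rw [add_neg_cancel, hmul0] at h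
    have h2 : a * (-b) + (a * b - a) = a := by rw [add_comm]; exact h.symm
    have h3 : a * (-b) = a - (a * b - a) := by rw [eq_sub_iff_add_eq]; exact h2
    rw [h3]; abel
  -- Lmul : (a*b)*c - a*b = a*(b*c - b) - a
  have Lmul : ∀ a b c : G, (a * b) * c - a * b = a * (b * c - b) - a := by
    intro a b c
    have h : a * (b * c - b) = a * (b * c) - a + a * (-b) := by
      have := hbrace a (b * c) (-b)
      rw [← sub_eq_add_neg] at this
      exact this
    rw [h, hmulneg, mul_assoc]
    abel
  -- Lprod : u * (u⁻¹ * z - u⁻¹) = z + u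
  have Lprod : ∀ u z : G, u * (u⁻¹ * z - u⁻¹) = z + u := by
    intro u z
    have h := Lmul u u⁻¹ z
    rw [mul_inv_cancel, one_mul, hone, sub_zero] at h
    rw [eq_sub_iff_add_eq] at h
    exact h.symm
  -- Lsplit : g*(b*c) - g = (g*b - g) + ((g*b)*c - g*b)
  have Lsplit : ∀ g b c : G, g * (b * c) - g = (g * b - g) + ((g * b) * c - g * b) := by
    intro g b c
    have h1 : g * (b + (b * c - b)) = g * b - g + g * (b * c - b) := hbrace g b (b * c - b)
    rw [add_sub_cancel] at h1
    rw [h1, Lmul g b c]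
    abel
  -- the key identity: g*(b*c) - g = (g*b-g) * lamB ((g*b-g)⁻¹ * g * b) c
  have Lkey : ∀ g b c : G,
      g * (b * c) - g
        = (g * b - g) * (((g * b - g)⁻¹ * g * b) * c - (g * b - g)⁻¹ * g * b) := by
    intro g b c
    have h1 : ((g * b - g)⁻¹ * g * b) * c - (g * b - g)⁻¹ * g * b
        = (g * b - g)⁻¹ * ((g * b) * c - g * b) - (g * b - g)⁻¹ := by
      have h2 := Lmul (g * b - g)⁻¹ (g * b) c
      rw [← mul_assoc] at h2
      exact h2
    rw [h1, Lprod (g * b - g) ((g * b) * c - g * b), Lsplit g b c]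
    abel
  set S : Set G := Set.range fun x : X => φ (lam x) with hS
  set H := Subgroup.closure S with hH
  -- generators are λ-stable
  have hgenstab : ∀ (g : G) (x : X), g * φ (lam x) - g ∈ S := by
    intro g x
    rw [hφ, ← hfund g x]
    exact ⟨act g x, rfl⟩
  -- λ-stability of H
  have stab : ∀ b ∈ H, ∀ g : G, g * b - g ∈ H := by
    intro b hb
    induction hb using Subgroup.closure_induction with
    | mem x hx =>
        intro g
        obtain ⟨y, rfl⟩ := hx
        exact Subgroup.subset_closure (hgenstab g y)
    | one =>
        intro g
        rw [mul_one, sub_self, ← hone]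
        exact Subgroup.one_mem _
    | mul x y hx hy ihx ihy =>
        intro g
        rw [Lkey g x y]
        exact Subgroup.mul_mem _ (ihx g) (ihy ((g * x - g)⁻¹ * g * x))
    | inv x hx ihx =>
        intro g
        have h := Lkey g x⁻¹ x
        rw [inv_mul_cancel, mul_one, sub_self, ← hone] at h
        have h2 : (g * x⁻¹ - g)
            = (((g * x⁻¹ - g)⁻¹ * g * x⁻¹) * x - (g * x⁻¹ - g)⁻¹ * g * x⁻¹)⁻¹ :=
          eq_inv_of_mul_eq_one_left h.symm
        rw [h2]
        exact Subgroup.inv_mem _ (ihx ((g * x⁻¹ - g)⁻¹ * g * x⁻¹))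
  -- H is closed under addition and negation
  have Hzero : (0 : G) ∈ H := by rw [← hone]; exact Subgroup.one_mem _
  have Hadd : ∀ a ∈ H, ∀ b ∈ H, a + b ∈ H := by
    intro a ha b hb
    have h := Lprod a b
    have hm : a⁻¹ * b - a⁻¹ ∈ H := stab b hb a⁻¹
    have : b + a ∈ H := h ▸ Subgroup.mul_mem _ ha hm
    rwa [add_comm]
  have Hneg : ∀ a ∈ H, -a ∈ H := by
    intro a ha
    have h : a * a⁻¹ - a = -a := by rw [mul_inv_cancel, hone]; abel
    exact h ▸ stab a⁻¹ (Subgroup.inv_mem _ ha) a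
  -- range φ ⊆ H
  have himg : ∀ g : G, φ g ∈ H := by
    intro g
    have hg : g ∈ AddSubgroup.closure (Set.range lam) := by rw [hgen]; trivial
    induction hg using AddSubgroup.closure_induction with
    | mem x hx =>
        obtain ⟨y, rfl⟩ := hx
        exact Subgroup.subset_closure ⟨y, rfl⟩
    | zero => rw [map_zero]; exact Hzero
    | add x y hx hy ihx ihy => rw [map_add]; exact Hadd _ ihx _ ihy
    | neg x hx ihx => rw [map_neg]; exact Hneg _ ihx
  -- H ⊆ range φ
  have hsub : ∀ b ∈ H, b ∈ Set.range φ := by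
    intro b hb
    induction hb using Subgroup.closure_induction with
    | mem x hx => obtain ⟨y, rfl⟩ := hx; exact ⟨lam y, rfl⟩
    | one => exact ⟨0, by rw [map_zero, hone]⟩
    | mul x y hx hy ihx ihy =>
        obtain ⟨g, rfl⟩ := ihx
        obtain ⟨h, rfl⟩ := ihy
        refine ⟨g + (φ g * h - φ g), ?_⟩
        rw [map_add, ← hφ]
        abel
    | inv x hx ihx =>
        obtain ⟨g, rfl⟩ := ihx
        refine ⟨(φ g)⁻¹ * (-g + φ g), ?_⟩
        have key : φ g * φ ((φ g)⁻¹ * (-g + φ g)) = 1 := by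
          have h1 : φ g * ((φ g)⁻¹ * (-g + φ g)) - φ g = -g := by
            rw [← mul_assoc, mul_inv_cancel, one_mul]; abel
          have h2 := hφ (φ g) ((φ g)⁻¹ * (-g + φ g))
          rw [h1] at h2
          have h3 : φ g * φ ((φ g)⁻¹ * (-g + φ g)) = φ g + φ (-g) := by
            rw [← h2]; abel
          rw [h3, ← map_add, add_neg_cancel, map_zero, hone]
        exact eq_inv_of_mul_eq_one_right key
  constructor
  · ext b
    exact ⟨fun hb => hsub b hb, fun ⟨g, hg⟩ => hg ▸ himg g⟩
  · rintro g a ⟨h, rfl⟩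
    exact ⟨g * h - g, (hφ g h).symm⟩
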